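/- Let A_{0∧1} <∘ A₀, A₁ <∘ A_{0∨1} be a commuting square of complete Boolean algebras with complete embeddings (identity inclusions), with projections h_{ji} : A_j → A_i defined by h_{ji}(a) = ∏{b ∈ A_i : b ≥ a}. Then the following are equivalent: (1) for all a₀ ∈ A₀ and a₁ ∈ A₁, if h_{0,0∧1}(a₀) · h_{1,0∧1}(a₁) ≠ 0 then a₀ · a₁ ≠ 0 in A_{0∨1}; (2) for all a₁ ∈ A₁, h_{0∨1,0}(a₁) = h_{1,0∧1}(a₁). -/
import Mathlib


/-- The projection onto a complete subalgebra `S`: `h(a) = ∏ {b ∈ S : b ≥ a}`. -/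
noncomputable def projSub {B : Type*} [CompleteBooleanAlgebra B] (S : Set B) (a : B) : B :=
  sInf {b | b ∈ S ∧ a ≤ b}

lemma le_projSub {B : Type*} [CompleteBooleanAlgebra B] (S : Set B) (a : B) :
    a ≤ projSub S a := le_sInf fun _ hb => hb.2

lemma projSub_le {B : Type*} [CompleteBooleanAlgebra B] {S : Set B} {a b : B}
    (hb : b ∈ S) (h : a ≤ b) : projSub S a ≤ b := sInf_le ⟨hb, h⟩

lemma projSub_mem {B : Type*} [CompleteBooleanAlgebra B] {S : Set B}
    (hinf : ∀ T : Set B, T ⊆ S → sInf T ∈ S) (a : B) : projSub S a ∈ S :=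
  hinf _ fun _ hb => hb.1

/-- disjointness transfer: for `b ∈ S`, `a ⊓ b = ⊥ ↔ projSub S a ⊓ b = ⊥`. -/
lemma projSub_disj {B : Type*} [CompleteBooleanAlgebra B] {S : Set B}
    (hcompl : ∀ x ∈ S, xᶜ ∈ S) {a b : B} (hb : b ∈ S) (h : a ⊓ b = ⊥) :
    projSub S a ⊓ b = ⊥ := by
  have h1 : a ≤ bᶜ := le_compl_iff_disjoint_right.mpr (disjoint_iff.mpr h)
  have h2 : projSub S a ≤ bᶜ := projSub_le (hcompl b hb) h1
  exact disjoint_iff.mp (le_compl_iff_disjoint_right.mp h2)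

/-- Correctness of a square of complete Boolean algebras `A_{0∧1} ⊆ A₀, A₁ ⊆ A_{0∨1}`
(modelled as complete subalgebras `S01 ⊆ S0, S1` of the ambient algebra `B = A_{0∨1}`)
is equivalent to the projection identity `h_{0∨1,0}(a₁) = h_{1,0∧1}(a₁)` for all
`a₁ ∈ A₁`. -/
theorem stmt9 {B : Type*} [CompleteBooleanAlgebra B] (S01 S0 S1 : Set B)
    (h010 : S01 ⊆ S0) (h011 : S01 ⊆ S1)
    (hinf01 : ∀ T : Set B, T ⊆ S01 → sInf T ∈ S01)
    (hcompl01 : ∀ x ∈ S01, xᶜ ∈ S01)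
    (hinf0 : ∀ T : Set B, T ⊆ S0 → sInf T ∈ S0)
    (hcompl0 : ∀ x ∈ S0, xᶜ ∈ S0)
    (hinf1 : ∀ T : Set B, T ⊆ S1 → sInf T ∈ S1)
    (hcompl1 : ∀ x ∈ S1, xᶜ ∈ S1) :
    (∀ a0 ∈ S0, ∀ a1 ∈ S1, projSub S01 a0 ⊓ projSub S01 a1 ≠ ⊥ → a0 ⊓ a1 ≠ ⊥) ↔
    (∀ a1 ∈ S1, projSub S0 a1 = projSub S01 a1) := by
  constructor
  · intro H a1 ha1
    -- `projSub S0 a1 ≤ projSub S01 a1` since the defining set shrinks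
    have hle : projSub S0 a1 ≤ projSub S01 a1 :=
      le_sInf fun b hb => sInf_le ⟨h010 hb.1, hb.2⟩
    refine le_antisymm hle ?_
    by_contra hlt
    have hne : projSub S01 a1 ⊓ (projSub S0 a1)ᶜ ≠ ⊥ := by
      intro h0
      exact hlt (sdiff_eq_bot_iff.mp (by rw [sdiff_eq]; exact h0))
    set a0 : B := (projSub S0 a1)ᶜ with ha0def
    have ha0 : a0 ∈ S0 := hcompl0 _ (projSub_mem hinf0 a1)
    have hne2 : projSub S01 a0 ⊓ projSub S01 a1 ≠ ⊥ := by
      intro h0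
      apply hne
      have : a0 ⊓ projSub S01 a1 ≤ projSub S01 a0 ⊓ projSub S01 a1 :=
        inf_le_inf_right _ (le_projSub _ _)
      rw [inf_comm] at this
      exact le_bot_iff.mp (this.trans_eq h0)
    have := H a0 ha0 a1 ha1 hne2
    apply this
    rw [ha0def]
    exact disjoint_iff.mp (disjoint_compl_left.mono_right (le_projSub S0 a1))
  · intro H a0 ha0 a1 ha1 hne hdisj
    apply hne
    -- a0 ⊓ a1 = ⊥, a0 ∈ S0 so projSub S0 a1 ≤ a0ᶜ, use (2)
    have h1 : a1 ⊓ a0 = ⊥ := by rw [inf_comm]; exact hdisj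
    have h2 : projSub S0 a1 ⊓ a0 = ⊥ := projSub_disj hcompl0 ha0 h1
    rw [H a1 ha1] at h2
    have h3 : a0 ⊓ projSub S01 a1 = ⊥ := by rw [inf_comm]; exact h2
    have h4 : projSub S01 a0 ⊓ projSub S01 a1 = ⊥ := by
      have := projSub_disj hcompl01 (projSub_mem hinf01 a1) h3
      -- this : projSub S01 a0 ⊓ projSub S01 a1 = ⊥ -- needs projSub S01 a1 ∈ S01
      exact this
    exact h4
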